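/- arXiv:1606.02802 — 4 statements merged into one kernel-verified Lean document; each statement's English description precedes it below -/
import Mathlib

section
/- Assume that for each 1 ≤ i ≤ m there exists a positive integer μ_i such that σ_i(n) − n ≤ μ_i for all n ≥ 1, and that for each k = 1, …, m, liminf_{n→∞} Σ_{i=1}^m Σ_{j=n+1}^{σ_k(n)} p_i(j) > (μ_k/(μ_k+1))^{μ_k+1}. Then every solution of (E_A) oscillates. -/
open Filter Finset

private lemma amgm_card {s : Finset ℕ} {F : ℕ → ℝ} (hF : ∀ t ∈ s, 0 ≤ F t) (hs : s.Nonempty) :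
    ∏ t ∈ s, F t ≤ ((∑ t ∈ s, F t) / s.card) ^ s.card := by
  have hcard : s.card ≠ 0 := Finset.card_ne_zero_of_mem hs.choose_spec
  have hn : (0:ℝ) < s.card := by
    have := Finset.card_pos.2 hs
    exact_mod_cast this
  have h := Real.geom_mean_le_arith_mean_weighted s (fun _ => ((s.card : ℝ))⁻¹) F
      (fun i _ => by positivity)
      (by rw [Finset.sum_const, nsmul_eq_mul]; field_simp) hF
  have hL : ∀ t ∈ s, (0:ℝ) ≤ F t ^ (((s.card : ℕ) : ℝ))⁻¹ := fun t ht =>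
    Real.rpow_nonneg (hF t ht) _
  calc ∏ t ∈ s, F t = (∏ t ∈ s, F t ^ (((s.card : ℕ) : ℝ))⁻¹) ^ s.card := by
        rw [← Finset.prod_pow]
        exact Finset.prod_congr rfl fun t ht =>
          (Real.rpow_inv_natCast_pow (hF t ht) hcard).symm
    _ ≤ (∑ t ∈ s, ((s.card : ℝ))⁻¹ * F t) ^ s.card := by
        exact pow_le_pow_left₀ (Finset.prod_nonneg hL) h _
    _ = ((∑ t ∈ s, F t) / s.card) ^ s.card := by
        rw [← Finset.mul_sum]; rw [div_eq_inv_mul]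

private lemma amgm_two {μ : ℕ} (hμ : 0 < μ) {a b : ℝ} (ha : 0 ≤ a) (hb : 0 ≤ b)
    (hab : a + μ * b = μ) : a * b ^ μ ≤ ((μ : ℝ) / (μ + 1)) ^ (μ + 1) := by
  have key := amgm_card (s := Finset.range (μ + 1))
      (F := fun t => if t = 0 then a else b)
      (fun t _ => by by_cases h : t = 0 <;> simp [h, ha, hb])
      ⟨0, Finset.mem_range.2 (by omega)⟩
  have hprod : ∏ t ∈ Finset.range (μ + 1), (if t = 0 then a else b) = a * b ^ μ := by
    rw [Finset.prod_range_succ']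
    simp [Nat.succ_ne_zero, mul_comm]
  have hsum : ∑ t ∈ Finset.range (μ + 1), (if t = 0 then a else b) = a + μ * b := by
    rw [Finset.sum_range_succ']
    simp [Nat.succ_ne_zero, add_comm, mul_comm]
  rw [hprod, hsum, hab, Finset.card_range] at key
  simpa using key

private lemma no_pos {m : ℕ} (hm : 0 < m) (p : Fin m → ℕ → ℝ) (σ : Fin m → ℕ → ℕ)
    (hp : ∀ i : Fin m, ∀ n : ℕ, 0 ≤ p i n)
    (hσ : ∀ i : Fin m, ∀ n : ℕ, 1 ≤ n → n + 1 ≤ σ i n)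
    (μ : Fin m → ℕ) (hμpos : ∀ i : Fin m, 0 < μ i)
    (hμ : ∀ i : Fin m, ∀ n : ℕ, 1 ≤ n → σ i n - n ≤ μ i)
    (hcond : ∀ k : Fin m,
      ((μ k : ℝ) / (μ k + 1)) ^ (μ k + 1) <
        Filter.liminf (fun n : ℕ => ∑ i : Fin m, ∑ j ∈ Finset.Icc (n + 1) (σ k n), p i j)
          Filter.atTop)
    (x : ℕ → ℝ)
    (hxeq : ∀ n : ℕ, 1 ≤ n → x n - x (n - 1) - ∑ i : Fin m, p i n * x (σ i n) = 0)
    (N : ℕ) (hpos : ∀ n ≥ N, 0 < x n) : False := by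
  haveI : Nonempty (Fin m) := ⟨⟨0, hm⟩⟩
  set P : ℕ → ℝ := fun t => ∑ i : Fin m, p i t with hPdef
  have hP : ∀ t, 0 ≤ P t := fun t => Finset.sum_nonneg fun i _ => hp i t
  set c : Fin m → ℝ := fun k => ((μ k : ℝ) / (μ k + 1)) ^ (μ k + 1) with hcdef
  have hc : ∀ k, 0 < c k := by
    intro k
    have h1 : (0:ℝ) < μ k := by exact_mod_cast hμpos k
    rw [hcdef]
    positivity
  -- choose d k strictly between c k and the liminf
  have hDk : ∀ k : Fin m, ∃ dk : ℝ, c k < dk ∧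
      ∀ᶠ n in atTop, dk < ∑ j ∈ Finset.Icc (n + 1) (σ k n), P j := by
    intro k
    have e : (fun n : ℕ => ∑ i : Fin m, ∑ j ∈ Finset.Icc (n + 1) (σ k n), p i j)
        = fun n : ℕ => ∑ j ∈ Finset.Icc (n + 1) (σ k n), P j := by
      funext n
      rw [hPdef]
      exact Finset.sum_comm
    have hcd := hcond k
    rw [e] at hcd
    set L := Filter.liminf (fun n : ℕ => ∑ j ∈ Finset.Icc (n + 1) (σ k n), P j) Filter.atTop with hL
    have hck : c k = ((μ k : ℝ) / (μ k + 1)) ^ (μ k + 1) := rfl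
    refine ⟨(c k + L) / 2, by rw [hck]; linarith, ?_⟩
    refine Filter.eventually_lt_of_lt_liminf (by rw [← hL]; rw [hck]; linarith) ?_
    exact Filter.isBoundedUnder_of ⟨0, fun n => Finset.sum_nonneg fun j _ => hP j⟩
  choose d hcd hev using hDk
  have hd0 : ∀ k, 0 < d k := fun k => lt_trans (hc k) (hcd k)
  obtain ⟨W₀, hW₀⟩ : ∃ W, ∀ n ≥ W, ∀ k : Fin m, d k < ∑ j ∈ Finset.Icc (n + 1) (σ k n), P j :=
    Filter.eventually_atTop.1 (Filter.eventually_all.2 hev)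
  -- monotonicity of x on [N, ∞)
  have mono : ∀ a, N ≤ a → ∀ b, a ≤ b → x a ≤ x b := by
    have step1 : ∀ t, N ≤ t → x t ≤ x (t + 1) := by
      intro t ht
      have he := hxeq (t + 1) (by omega)
      rw [Nat.add_sub_cancel] at he
      have hsum : 0 ≤ ∑ i : Fin m, p i (t + 1) * x (σ i (t + 1)) := by
        refine Finset.sum_nonneg fun i _ => mul_nonneg (hp i (t + 1)) ?_
        refine (hpos _ ?_).le
        have := hσ i (t + 1) (by omega)
        omega
      linarith
    intro a ha b hb
    induction b, hb using Nat.le_induction with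
    | base => exact le_refl _
    | succ b hb ih => exact le_trans ih (step1 b (by omega))
  set M₀ : ℕ := max (N + 1) W₀ with hM₀def
  have hM₀N : N + 1 ≤ M₀ := le_max_left _ _
  have hM₀W : W₀ ≤ M₀ := le_max_right _ _
  -- the bootstrap predicate
  set Good : ℝ → Prop := fun lam => ∀ i : Fin m, ∀ n, M₀ ≤ n → lam * x n ≤ x (σ i n)
    with hGooddef
  have hG1 : Good 1 := by
    intro i n hn
    rw [one_mul]
    exact mono n (by omega) (σ i n) (by have := hσ i n (by omega); omega)
  -- the uniform multiplicative gap
  set q : ℝ := Finset.univ.inf' Finset.univ_nonempty (fun k => d k / c k) with hqdef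
  have hq1 : 1 < q := by
    rw [hqdef, Finset.lt_inf'_iff]
    exact fun k _ => (one_lt_div (hc k)).2 (hcd k)
  have hqle : ∀ k, q ≤ d k / c k := fun k => Finset.inf'_le _ (Finset.mem_univ k)
  -- the key bootstrap step
  have key : ∀ lam : ℝ, 1 ≤ lam → Good lam → Good (q * lam) ∧ ∀ k, lam * d k < μ k := by
    intro lam hlam hGood
    have hstep : ∀ t, M₀ ≤ t → x (t - 1) ≤ x t * (1 - lam * P t) ∧ 0 < 1 - lam * P t := by
      intro t ht
      have ht1 : 1 ≤ t := by omega
      have he := hxeq t ht1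
      have hsum : lam * P t * x t ≤ ∑ i : Fin m, p i t * x (σ i t) := by
        have e1 : lam * P t * x t = ∑ i : Fin m, p i t * (lam * x t) := by
          simp only [hPdef, Finset.sum_mul, Finset.mul_sum]
          exact Finset.sum_congr rfl fun i _ => by ring
        rw [e1]
        exact Finset.sum_le_sum fun i _ =>
          mul_le_mul_of_nonneg_left (hGood i t ht) (hp i t)
      have hring : x t * (1 - lam * P t) = x t - lam * P t * x t := by ring
      have hle : x (t - 1) ≤ x t * (1 - lam * P t) := by rw [hring]; linarith
      have hxt1 : 0 < x (t - 1) := hpos _ (by omega)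
      have hxt : 0 < x t := hpos _ (by omega)
      refine ⟨hle, ?_⟩
      by_contra hcon
      push_neg at hcon
      nlinarith
    have tele : ∀ n, M₀ ≤ n → ∀ s, n ≤ s →
        x n ≤ x s * ∏ t ∈ Finset.Icc (n + 1) s, (1 - lam * P t) := by
      intro n hn s hs
      induction s, hs using Nat.le_induction with
      | base => rw [Finset.Icc_eq_empty (by omega), Finset.prod_empty, mul_one]
      | succ s hs ih =>
        have hprodnn : 0 ≤ ∏ t ∈ Finset.Icc (n + 1) s, (1 - lam * P t) :=
          Finset.prod_nonneg fun t ht =>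
            (hstep t (by have := (Finset.mem_Icc.1 ht).1; omega)).2.le
        have h1 : x s ≤ x (s + 1) * (1 - lam * P (s + 1)) := by
          have := (hstep (s + 1) (by omega)).1
          rwa [Nat.add_sub_cancel] at this
        calc x n ≤ x s * ∏ t ∈ Finset.Icc (n + 1) s, (1 - lam * P t) := ih
          _ ≤ (x (s + 1) * (1 - lam * P (s + 1))) * ∏ t ∈ Finset.Icc (n + 1) s, (1 - lam * P t) :=
              mul_le_mul_of_nonneg_right h1 hprodnn
          _ = x (s + 1) * ∏ t ∈ Finset.Icc (n + 1) (s + 1), (1 - lam * P t) := by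
              rw [Finset.prod_Icc_succ_top (by omega)]
              ring
    -- the main estimate for each k and each n ≥ M₀
    have main : ∀ k : Fin m, ∀ n, M₀ ≤ n →
        (d k / c k) * lam * x n ≤ x (σ k n) ∧ lam * d k < μ k := by
      intro k n hn
      have hn1 : 1 ≤ n := by omega
      have hns : n + 1 ≤ σ k n := hσ k n hn1
      have hsm : σ k n ≤ n + μ k := by have := hμ k n hn1; omega
      have hμk : 0 < μ k := hμpos k
      have hμkR : (0:ℝ) < μ k := by exact_mod_cast hμk
      set A : ℝ := ∑ j ∈ Finset.Icc (n + 1) (σ k n), P j with hAdef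
      have hApos : d k < A := hW₀ n (by omega) k
      set Q : ℕ → ℝ := fun t => if t ≤ σ k n then P t else 0 with hQdef
      have hsub : Finset.Icc (n + 1) (σ k n) ⊆ Finset.Icc (n + 1) (n + μ k) :=
        Finset.Icc_subset_Icc_right hsm
      have hQsum : ∑ t ∈ Finset.Icc (n + 1) (n + μ k), Q t = A := by
        rw [← Finset.sum_subset hsub (fun t _ ht => by
          rw [hQdef]
          have : ¬ t ≤ σ k n := fun hc => ht (Finset.mem_Icc.2 ⟨(Finset.mem_Icc.1 ‹t ∈ Finset.Icc (n+1) (n + μ k)›).1, hc⟩)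
          simp [this])]
        refine Finset.sum_congr rfl fun t ht => ?_
        rw [hQdef]
        simp [(Finset.mem_Icc.1 ht).2]
      have hQprod : ∏ t ∈ Finset.Icc (n + 1) (n + μ k), (1 - lam * Q t)
          = ∏ t ∈ Finset.Icc (n + 1) (σ k n), (1 - lam * P t) := by
        rw [← Finset.prod_subset hsub (fun t _ ht => by
          rw [hQdef]
          have : ¬ t ≤ σ k n := fun hc => ht (Finset.mem_Icc.2 ⟨(Finset.mem_Icc.1 ‹t ∈ Finset.Icc (n+1) (n + μ k)›).1, hc⟩)
          simp [this])]
        refine Finset.prod_congr rfl fun t ht => ?_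
        rw [hQdef]
        simp [(Finset.mem_Icc.1 ht).2]
      have hbigcard : (Finset.Icc (n + 1) (n + μ k)).card = μ k := by
        rw [Nat.card_Icc]; omega
      have hbigne : (Finset.Icc (n + 1) (n + μ k)).Nonempty :=
        ⟨n + 1, Finset.mem_Icc.2 ⟨le_refl _, by omega⟩⟩
      have hfpos : ∀ t ∈ Finset.Icc (n + 1) (n + μ k), 0 < 1 - lam * Q t := by
        intro t ht
        rw [hQdef]
        by_cases hts : t ≤ σ k n
        · simp only [hts, if_true]
          exact (hstep t (by have := (Finset.mem_Icc.1 ht).1; omega)).2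
        · simp [hts]
      have hAMGM := amgm_card (s := Finset.Icc (n + 1) (n + μ k))
          (F := fun t => 1 - lam * Q t) (fun t ht => (hfpos t ht).le) hbigne
      have hsumF : ∑ t ∈ Finset.Icc (n + 1) (n + μ k), (1 - lam * Q t) = μ k - lam * A := by
        rw [Finset.sum_sub_distrib, Finset.sum_const, ← Finset.mul_sum, hQsum, hbigcard,
          nsmul_eq_mul, mul_one]
      have hsumpos : 0 < (μ k : ℝ) - lam * A := by
        have := Finset.sum_pos hfpos hbigne
        rwa [hsumF] at this
      have hbound : lam * d k < μ k := by nlinarith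
      have hb0 : 0 ≤ ((μ k : ℝ) - lam * d k) / μ k := by
        apply div_nonneg _ hμkR.le
        nlinarith
      have hprod_le : ∏ t ∈ Finset.Icc (n + 1) (σ k n), (1 - lam * P t)
          ≤ (((μ k : ℝ) - lam * d k) / μ k) ^ μ k := by
        rw [← hQprod]
        refine le_trans hAMGM ?_
        rw [hsumF, hbigcard]
        refine pow_le_pow_left₀ (by positivity) ?_ _
        exact (div_le_div_iff_of_pos_right hμkR).2 (by nlinarith)
      have hxσ : 0 < x (σ k n) := hpos _ (by omega)
      have hxn : 0 < x n := hpos _ (by omega)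
      have htel := tele n hn (σ k n) (by omega)
      set b : ℝ := ((μ k : ℝ) - lam * d k) / μ k with hbdef
      have hkey : (lam * d k) * b ^ μ k ≤ c k := by
        have hab : lam * d k + (μ k : ℝ) * b = μ k := by
          rw [hbdef]; field_simp; ring
        exact amgm_two (hμpos k) (mul_nonneg (by linarith) (hd0 k).le) hb0 hab
      have e1 : x n ≤ x (σ k n) * b ^ μ k :=
        le_trans htel (mul_le_mul_of_nonneg_left hprod_le hxσ.le)
      have e2 : lam * d k * x n ≤ x (σ k n) * c k := by
        calc lam * d k * x n ≤ lam * d k * (x (σ k n) * b ^ μ k) :=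
              mul_le_mul_of_nonneg_left e1 (mul_nonneg (by linarith) (hd0 k).le)
          _ = x (σ k n) * (lam * d k * b ^ μ k) := by ring
          _ ≤ x (σ k n) * c k := mul_le_mul_of_nonneg_left hkey hxσ.le
      refine ⟨?_, hbound⟩
      have e3 : (d k / c k) * lam * x n = (lam * d k * x n) / c k := by
        ring
      rw [e3, div_le_iff₀ (hc k)]
      exact e2
    refine ⟨?_, fun k => (main k M₀ le_rfl).2⟩
    intro i n hn
    have h1 := (main i n hn).1
    have hxn : 0 ≤ x n := (hpos n (by omega)).le
    have h2 : q * lam ≤ (d i / c i) * lam :=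
      mul_le_mul_of_nonneg_right (hqle i) (by linarith)
    calc q * lam * x n ≤ (d i / c i) * lam * x n := mul_le_mul_of_nonneg_right h2 hxn
      _ ≤ x (σ i n) := h1
  -- iterate the bootstrap
  have hGn : ∀ r : ℕ, Good (q ^ r) := by
    intro r
    induction r with
    | zero => simpa using hG1
    | succ r ih =>
      have h := (key (q ^ r) (one_le_pow₀ hq1.le) ih).1
      rw [pow_succ, mul_comm]
      exact h
  have hk0 : ∀ r : ℕ, q ^ r * d ⟨0, hm⟩ < μ ⟨0, hm⟩ :=
    fun r => (key (q ^ r) (one_le_pow₀ hq1.le) (hGn r)).2 ⟨0, hm⟩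
  obtain ⟨r, hr⟩ := pow_unbounded_of_one_lt ((μ (⟨0, hm⟩ : Fin m) : ℝ) / d ⟨0, hm⟩) hq1
  rw [div_lt_iff₀ (hd0 ⟨0, hm⟩)] at hr
  have := hk0 r
  linarith

/-- Theorem 3.3′: if each advance is bounded, `σ_i(n) - n ≤ μ_i` with `μ_i` a positive
integer, and for each `k`, `liminf_{n→∞} ∑_{i=1}^m ∑_{j=n+1}^{σ_k(n)} p_i(j) >
(μ_k/(μ_k+1))^{μ_k+1}`, then every solution of the advanced equation oscillates. -/
theorem stmt_11 {m : ℕ} (hm : 0 < m) (p : Fin m → ℕ → ℝ) (σ : Fin m → ℕ → ℕ)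
    (hp : ∀ i : Fin m, ∀ n : ℕ, 0 ≤ p i n)
    (hσ : ∀ i : Fin m, ∀ n : ℕ, 1 ≤ n → n + 1 ≤ σ i n)
    (μ : Fin m → ℕ) (hμpos : ∀ i : Fin m, 0 < μ i)
    (hμ : ∀ i : Fin m, ∀ n : ℕ, 1 ≤ n → σ i n - n ≤ μ i)
    (hcond : ∀ k : Fin m,
      ((μ k : ℝ) / (μ k + 1)) ^ (μ k + 1) <
        Filter.liminf (fun n : ℕ => ∑ i : Fin m, ∑ j ∈ Finset.Icc (n + 1) (σ k n), p i j)
          Filter.atTop)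
    (x : ℕ → ℝ)
    (hxeq : ∀ n : ℕ, 1 ≤ n → x n - x (n - 1) - ∑ i : Fin m, p i n * x (σ i n) = 0) :
    (¬ ∃ N : ℕ, ∀ n ≥ N, 0 < x n) ∧ (¬ ∃ N : ℕ, ∀ n ≥ N, x n < 0) := by
  constructor
  · rintro ⟨N, hN⟩
    exact no_pos hm p σ hp hσ μ hμpos hμ hcond x hxeq N hN
  · rintro ⟨N, hN⟩
    refine no_pos hm p σ hp hσ μ hμpos hμ hcond (fun n => -x n) ?_ N
      (fun n hn => by simpa using hN n hn)
    intro n hn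
    have h := hxeq n hn
    have e : ∑ i : Fin m, p i n * (-x (σ i n)) = -∑ i : Fin m, p i n * x (σ i n) := by
      rw [← Finset.sum_neg_distrib]
      exact Finset.sum_congr rfl fun i _ => by ring
    simp only [e]
    linarith
end

section
/- Assume that the advances are bounded, i.e. for each 1 ≤ i ≤ m there exists μ_i > 0 with σ_i(n) − n ≤ μ_i for all n ≥ 1, and that for each k = 1, …, m, liminf_{n→∞} Σ_{i=1}^m Σ_{j=n+1}^{σ_k(n)} p_i(j) > 1/e. Then every solution of (E_A) oscillates. -/
open Filter Finset Real

private lemma stmt12_key {m : ℕ} (hm : 0 < m) (p : Fin m → ℕ → ℝ) (σ : Fin m → ℕ → ℕ)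
    (hp : ∀ i : Fin m, ∀ n : ℕ, 0 ≤ p i n)
    (hσ : ∀ i : Fin m, ∀ n : ℕ, 1 ≤ n → n + 1 ≤ σ i n)
    (μ : Fin m → ℝ) (hμpos : ∀ i : Fin m, 0 < μ i)
    (hμ : ∀ i : Fin m, ∀ n : ℕ, 1 ≤ n → (σ i n : ℝ) - n ≤ μ i)
    (hcond : ∀ k : Fin m,
      1 / Real.exp 1 <
        Filter.liminf (fun n : ℕ => ∑ i : Fin m, ∑ j ∈ Finset.Icc (n + 1) (σ k n), p i j)
          Filter.atTop)
    (x : ℕ → ℝ)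
    (hxeq : ∀ n : ℕ, 1 ≤ n → x n - x (n - 1) - ∑ i : Fin m, p i n * x (σ i n) = 0) :
    ¬ ∃ N : ℕ, ∀ n ≥ N, 0 < x n := by
  rintro ⟨N0, hN0⟩
  have hmne : Nonempty (Fin m) := ⟨⟨0, hm⟩⟩
  have hepos : (0:ℝ) < Real.exp 1 := Real.exp_pos 1
  -- choose a uniform lower bound α with 1/e < α < each liminf
  set L : Fin m → ℝ := fun k =>
    Filter.liminf (fun n : ℕ => ∑ i : Fin m, ∑ j ∈ Finset.Icc (n + 1) (σ k n), p i j)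
      Filter.atTop with hL
  have hβne : (Finset.univ : Finset (Fin m)).Nonempty := Finset.univ_nonempty
  set β := Finset.univ.inf' hβne L with hβ
  have hβgt : 1 / Real.exp 1 < β := by
    rw [hβ, Finset.lt_inf'_iff]
    exact fun k _ => hcond k
  set α := (1 / Real.exp 1 + β) / 2 with hα
  have hα1 : 1 / Real.exp 1 < α := by rw [hα]; linarith
  have hαβ : α < β := by rw [hα]; linarith
  have hαpos : 0 < α := lt_trans (by positivity) hα1
  have heα : 1 < Real.exp 1 * α := by
    have h1 : Real.exp 1 * (1 / Real.exp 1) < Real.exp 1 * α :=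
      (mul_lt_mul_iff_right₀ hepos).2 hα1
    rwa [mul_one_div_cancel (ne_of_gt hepos)] at h1
  -- eventual lower bound on the window sums
  have hev : ∀ᶠ n in Filter.atTop, ∀ k : Fin m,
      α < ∑ i : Fin m, ∑ j ∈ Finset.Icc (n + 1) (σ k n), p i j := by
    rw [Filter.eventually_all]
    intro k
    exact Filter.eventually_lt_of_lt_liminf
      (lt_of_lt_of_le hαβ (Finset.inf'_le _ (Finset.mem_univ k)))
      (Filter.isBoundedUnder_of ⟨0, fun n => Finset.sum_nonneg fun i _ =>
        Finset.sum_nonneg fun j _ => hp i j⟩)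
  obtain ⟨N1, hN1⟩ := Filter.eventually_atTop.mp hev
  set Q : ℕ → ℝ := fun j => ∑ i : Fin m, p i j with hQdef
  have hQnn : ∀ j, 0 ≤ Q j := fun j => Finset.sum_nonneg fun i _ => hp i j
  have hsum : ∀ (k : Fin m) (n : ℕ), ∑ j ∈ Finset.Icc (n + 1) (σ k n), Q j
      = ∑ i : Fin m, ∑ j ∈ Finset.Icc (n + 1) (σ k n), p i j := fun k n => Finset.sum_comm
  set M := max N0 1 with hM
  have hxM : ∀ n, M ≤ n → 0 < x n := fun n hn => hN0 n (le_trans (le_max_left _ _) hn)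
  -- monotonicity on [M, ∞)
  have hmono : ∀ a b, M ≤ a → a ≤ b → x a ≤ x b := by
    intro a b ha hab
    induction b, hab using Nat.le_induction with
    | base => exact le_refl _
    | succ b hab ih =>
      have hb1 : 1 ≤ b + 1 := by omega
      have heq := hxeq (b + 1) hb1
      have hterm : 0 ≤ ∑ i : Fin m, p i (b + 1) * x (σ i (b + 1)) := by
        refine Finset.sum_nonneg fun i _ => mul_nonneg (hp i (b + 1)) ?_
        have hs := hσ i (b + 1) hb1
        exact (hxM _ (by omega)).le
      have : x b ≤ x (b + 1) := by
        have hb : b + 1 - 1 = b := by omega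
        rw [hb] at heq
        linarith
      linarith
  set N2 := max N1 (M + 1) with hN2
  have hN2N1 : N1 ≤ N2 := le_max_left _ _
  have hN2M : M + 1 ≤ N2 := le_max_right _ _
  have hN2pos : 1 ≤ N2 := by omega
  -- the boosting sequence c
  set c : ℕ → ℝ := fun t => Nat.rec (1 : ℝ) (fun _ ct => Real.exp (α * ct)) t with hc
  have hc0 : c 0 = 1 := rfl
  have hcs : ∀ t, c (t + 1) = Real.exp (α * c t) := fun t => rfl
  have hc1 : ∀ t, 1 ≤ c t := by
    intro t
    induction t with
    | zero => rw [hc0]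
    | succ t ih =>
      rw [hcs]
      exact Real.one_le_exp (by positivity)
  -- step inequality from the claim at level t
  have hstep : ∀ t, (∀ n, N2 ≤ n → ∀ k, c t * x n ≤ x (σ k n)) →
      ∀ j, N2 ≤ j → x (j - 1) ≤ x j * (1 - c t * Q j) := by
    intro t hC j hj
    have hj1 : 1 ≤ j := le_trans hN2pos hj
    have heq := hxeq j hj1
    have hterm : c t * Q j * x j ≤ ∑ i : Fin m, p i j * x (σ i j) := by
      have h1 : c t * Q j * x j = ∑ i : Fin m, p i j * (c t * x j) := by
        simp only [hQdef, Finset.sum_mul, Finset.mul_sum]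
        exact Finset.sum_congr rfl fun i _ => by ring
      rw [h1]
      exact Finset.sum_le_sum fun i _ =>
        mul_le_mul_of_nonneg_left (hC j hj i) (hp i j)
    nlinarith [heq, hterm]
  have hfac : ∀ t, (∀ n, N2 ≤ n → ∀ k, c t * x n ≤ x (σ k n)) →
      ∀ j, N2 ≤ j → 0 < 1 - c t * Q j := by
    intro t hC j hj
    have hx1 : 0 < x (j - 1) := hxM _ (by omega)
    have hxj : 0 < x j := hxM _ (by omega)
    have h := hstep t hC j hj
    nlinarith
  -- product inequality
  have hprod : ∀ t, (∀ n, N2 ≤ n → ∀ k, c t * x n ≤ x (σ k n)) →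
      ∀ a b, N2 ≤ a → a ≤ b →
        x a ≤ x b * ∏ j ∈ Finset.Icc (a + 1) b, (1 - c t * Q j) := by
    intro t hC a b ha hab
    induction b, hab using Nat.le_induction with
    | base =>
      rw [Finset.Icc_eq_empty (by omega : ¬ a + 1 ≤ a), Finset.prod_empty, mul_one]
    | succ b hab ih =>
      have hprodpos : 0 < ∏ j ∈ Finset.Icc (a + 1) b, (1 - c t * Q j) :=
        Finset.prod_pos fun j hj => hfac t hC j
          (by have := (Finset.mem_Icc.mp hj).1; omega)
      have h1 : x b ≤ x (b + 1) * (1 - c t * Q (b + 1)) := by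
        have := hstep t hC (b + 1) (by omega)
        simpa using this
      calc x a ≤ x b * ∏ j ∈ Finset.Icc (a + 1) b, (1 - c t * Q j) := ih
        _ ≤ (x (b + 1) * (1 - c t * Q (b + 1))) *
              ∏ j ∈ Finset.Icc (a + 1) b, (1 - c t * Q j) :=
            mul_le_mul_of_nonneg_right h1 hprodpos.le
        _ = x (b + 1) * ∏ j ∈ Finset.Icc (a + 1) (b + 1), (1 - c t * Q j) := by
            rw [Finset.prod_Icc_succ_top (by omega : a + 1 ≤ b + 1)]; ring
  -- main claim by induction on t
  have hclaim : ∀ t, ∀ n, N2 ≤ n → ∀ k, c t * x n ≤ x (σ k n) := by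
    intro t
    induction t with
    | zero =>
      intro n hn k
      rw [hc0, one_mul]
      have hs := hσ k n (le_trans hN2pos hn)
      exact hmono n (σ k n) (by omega) (by omega)
    | succ t ih =>
      intro n hn k
      have hn1 : 1 ≤ n := le_trans hN2pos hn
      have hσn := hσ k n hn1
      have hxn : 0 < x n := hxM n (by omega)
      have hct : 0 < c t := lt_of_lt_of_le one_pos (hc1 t)
      have hSge : α ≤ ∑ j ∈ Finset.Icc (n + 1) (σ k n), Q j := by
        rw [hsum]; exact (hN1 n (le_trans hN2N1 hn) k).le
      have hpr := hprod t ih n (σ k n) hn (by omega)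
      have hexp : ∏ j ∈ Finset.Icc (n + 1) (σ k n), (1 - c t * Q j)
          ≤ Real.exp (-(c t * ∑ j ∈ Finset.Icc (n + 1) (σ k n), Q j)) := by
        calc ∏ j ∈ Finset.Icc (n + 1) (σ k n), (1 - c t * Q j)
            ≤ ∏ j ∈ Finset.Icc (n + 1) (σ k n), Real.exp (-(c t * Q j)) :=
              Finset.prod_le_prod
                (fun j hj => (hfac t ih j (by have := (Finset.mem_Icc.mp hj).1; omega)).le)
                (fun j _ => by nlinarith [Real.add_one_le_exp (-(c t * Q j))])
          _ = Real.exp (∑ j ∈ Finset.Icc (n + 1) (σ k n), -(c t * Q j)) :=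
              (Real.exp_sum _ _).symm
          _ = Real.exp (-(c t * ∑ j ∈ Finset.Icc (n + 1) (σ k n), Q j)) := by
              congr 1
              rw [Finset.mul_sum, Finset.sum_neg_distrib]
      have hexp2 : Real.exp (-(c t * ∑ j ∈ Finset.Icc (n + 1) (σ k n), Q j))
          ≤ Real.exp (-(c t * α)) := by
        apply Real.exp_le_exp.2
        have := mul_le_mul_of_nonneg_left hSge hct.le
        linarith
      have hprodnn : 0 ≤ x (σ k n) := (hxM _ (by omega)).le
      have key : x n ≤ x (σ k n) * Real.exp (-(c t * α)) :=
        le_trans hpr (le_trans (mul_le_mul_of_nonneg_left hexp hprodnn)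
          (mul_le_mul_of_nonneg_left hexp2 hprodnn))
      rw [hcs]
      have h2 : Real.exp (α * c t) * x n
          ≤ Real.exp (α * c t) * (x (σ k n) * Real.exp (-(c t * α))) :=
        mul_le_mul_of_nonneg_left key (Real.exp_pos _).le
      have h3 : Real.exp (α * c t) * (x (σ k n) * Real.exp (-(c t * α))) = x (σ k n) := by
        rw [Real.exp_neg, mul_comm (c t) α]
        field_simp
      rw [h3] at h2
      exact h2
  -- growth of c
  have hcge : ∀ t, (Real.exp 1 * α) ^ t ≤ c t := by
    intro t
    induction t with
    | zero => rw [hc0, pow_zero]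
    | succ t ih =>
      rw [hcs, pow_succ]
      have hct : 0 < c t := lt_of_lt_of_le one_pos (hc1 t)
      have hexpu : Real.exp 1 * (α * c t) ≤ Real.exp (α * c t) := by
        have h := Real.add_one_le_exp (α * c t - 1)
        have h2 : Real.exp (α * c t - 1) = Real.exp (α * c t) / Real.exp 1 := by
          rw [Real.exp_sub]
        rw [h2] at h
        have h3 : α * c t ≤ Real.exp (α * c t) / Real.exp 1 := by linarith
        calc Real.exp 1 * (α * c t) ≤ Real.exp 1 * (Real.exp (α * c t) / Real.exp 1) :=
              mul_le_mul_of_nonneg_left h3 hepos.le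
          _ = Real.exp (α * c t) := by field_simp
      have hpnn : (0:ℝ) ≤ (Real.exp 1 * α) ^ t := by positivity
      calc (Real.exp 1 * α) ^ t * (Real.exp 1 * α) ≤ c t * (Real.exp 1 * α) :=
            mul_le_mul_of_nonneg_right ih (by positivity)
        _ = Real.exp 1 * (α * c t) := by ring
        _ ≤ Real.exp (α * c t) := hexpu
  -- final contradiction at a pointed window
  set k0 : Fin m := ⟨0, hm⟩ with hk0
  have hσ0 := hσ k0 N2 hN2pos
  have hSα : α < ∑ j ∈ Finset.Icc (N2 + 1) (σ k0 N2), Q j := by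
    rw [hsum]; exact hN1 N2 hN2N1 k0
  set s := Finset.Icc (N2 + 1) (σ k0 N2) with hs
  have hcard : s.card = σ k0 N2 - N2 := by rw [hs, Nat.card_Icc]; omega
  have hcardpos : 0 < s.card := by omega
  have hcardμ : (s.card : ℝ) ≤ μ k0 := by
    have := hμ k0 N2 hN2pos
    have h1 : (s.card : ℝ) = (σ k0 N2 : ℝ) - N2 := by
      rw [hcard, Nat.cast_sub (by omega)]
    linarith
  have hcR : (0:ℝ) < s.card := by exact_mod_cast hcardpos
  obtain ⟨j, hjs, hjQ⟩ : ∃ j ∈ s, α / s.card < Q j := by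
    apply Finset.exists_lt_of_sum_lt
    rw [Finset.sum_const, nsmul_eq_mul, mul_div_cancel₀ _ (ne_of_gt hcR)]
    exact hSα
  have hQj : 0 < Q j := lt_of_le_of_lt (div_nonneg hαpos.le hcR.le) hjQ
  have hjN2 : N2 ≤ j := by
    have := (Finset.mem_Icc.mp hjs).1; omega
  obtain ⟨t, ht⟩ : ∃ t : ℕ, 1 / Q j < (Real.exp 1 * α) ^ t :=
    pow_unbounded_of_one_lt (1 / Q j) heα
  have hctQ : 1 < c t * Q j := by
    have h1 : 1 / Q j < c t := lt_of_lt_of_le ht (hcge t)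
    calc 1 = (1 / Q j) * Q j := by field_simp
      _ < c t * Q j := by
          exact mul_lt_mul_of_pos_right h1 hQj
  have := hfac t (hclaim t) j hjN2
  linarith

/-- Theorem 3.4′: if the advances are bounded (`σ_i(n) - n ≤ μ_i` for some `μ_i > 0`)
and for each `k`, `liminf_{n→∞} ∑_{i=1}^m ∑_{j=n+1}^{σ_k(n)} p_i(j) > 1/e`,
then every solution of the advanced equation oscillates. -/
theorem stmt_12 {m : ℕ} (hm : 0 < m) (p : Fin m → ℕ → ℝ) (σ : Fin m → ℕ → ℕ)
    (hp : ∀ i : Fin m, ∀ n : ℕ, 0 ≤ p i n)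
    (hσ : ∀ i : Fin m, ∀ n : ℕ, 1 ≤ n → n + 1 ≤ σ i n)
    (μ : Fin m → ℝ) (hμpos : ∀ i : Fin m, 0 < μ i)
    (hμ : ∀ i : Fin m, ∀ n : ℕ, 1 ≤ n → (σ i n : ℝ) - n ≤ μ i)
    (hcond : ∀ k : Fin m,
      1 / Real.exp 1 <
        Filter.liminf (fun n : ℕ => ∑ i : Fin m, ∑ j ∈ Finset.Icc (n + 1) (σ k n), p i j)
          Filter.atTop)
    (x : ℕ → ℝ)
    (hxeq : ∀ n : ℕ, 1 ≤ n → x n - x (n - 1) - ∑ i : Fin m, p i n * x (σ i n) = 0) :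
    (¬ ∃ N : ℕ, ∀ n ≥ N, 0 < x n) ∧ (¬ ∃ N : ℕ, ∀ n ≥ N, x n < 0) := by
  constructor
  · exact stmt12_key hm p σ hp hσ μ hμpos hμ hcond x hxeq
  · rintro ⟨N, hN⟩
    have hneg : ∀ n : ℕ, 1 ≤ n →
        (fun n => -x n) n - (fun n => -x n) (n - 1)
          - ∑ i : Fin m, p i n * (fun n => -x n) (σ i n) = 0 := by
      intro n hn
      have := hxeq n hn
      simp only [mul_neg]
      rw [Finset.sum_neg_distrib]
      linarith
    exact stmt12_key hm p σ hp hσ μ hμpos hμ hcond (fun n => -x n) hneg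
      ⟨N, fun n hn => by simpa using hN n hn⟩
end

section
/- Assume lim_{n→∞} τ(n) = ∞ and p(n) < 1 for all n, and let ξ(n) = max_{0≤s≤n} τ(s). If limsup_{n→∞} Σ_{j=ξ(n)}^{n} p(j) Π_{i=τ(j)}^{ξ(n)−1} (1 − p(i))^{−1} > 1, then every solution of the equation Δx(n) + p(n) x(τ(n)) = 0 oscillates. -/
/-- `ξ(n) = max_{0 ≤ s ≤ n} τ(s)` (for `n ≥ 0`). -/
noncomputable def xiMax (τ : ℤ → ℤ) (n : ℤ) : ℤ :=
  Finset.fold max (τ 0) τ (Finset.Icc 0 n)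

lemma xiMax_le {τ : ℤ → ℤ} {n c : ℤ} (hn : 0 ≤ n) (h : ∀ s, 0 ≤ s → s ≤ n → τ s ≤ c) :
    xiMax τ n ≤ c := by
  rw [xiMax, Finset.fold_max_le]
  refine ⟨h 0 le_rfl hn, fun s hs => ?_⟩
  rw [Finset.mem_Icc] at hs
  exact h s hs.1 hs.2

lemma le_xiMax {τ : ℤ → ℤ} {n s : ℤ} (hs : 0 ≤ s) (hsn : s ≤ n) : τ s ≤ xiMax τ n := by
  rw [xiMax, Finset.le_fold_max]
  exact Or.inr ⟨s, Finset.mem_Icc.2 ⟨hs, hsn⟩, le_rfl⟩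

private lemma Icc_succ_top {a b : ℤ} (h : a ≤ b + 1) :
    Finset.Icc a (b + 1) = insert (b + 1) (Finset.Icc a b) := by
  ext t; simp only [Finset.mem_Icc, Finset.mem_insert]; omega

private lemma Ico_succ_top {a b : ℤ} (h : a ≤ b) :
    Finset.Ico a (b + 1) = insert b (Finset.Ico a b) := by
  ext t; simp only [Finset.mem_Ico, Finset.mem_insert]; omega

private lemma telescope (x : ℤ → ℝ) {a n : ℤ} (h : a ≤ n) :
    ∑ j ∈ Finset.Icc a n, (x (j + 1) - x j) = x (n + 1) - x a := by
  refine Int.le_induction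
    (motive := fun n _ => ∑ j ∈ Finset.Icc a n, (x (j + 1) - x j) = x (n + 1) - x a)
    (by simp) (fun n hn ih => ?_) n h
  beta_reduce at ih ⊢
  rw [Icc_succ_top (by omega), Finset.sum_insert (by simp), ih]
  ring

/-- Main auxiliary lemma: no eventually positive solution. -/
lemma no_ev_pos (p : ℤ → ℝ) (τ : ℤ → ℤ)
    (hp : ∀ n : ℤ, 0 ≤ n → 0 ≤ p n)
    (hp1 : ∀ n : ℤ, 0 ≤ n → p n < 1)
    (hτ : ∀ n : ℤ, 0 ≤ n → τ n ≤ n - 1)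
    (hτlim : Filter.Tendsto τ Filter.atTop Filter.atTop)
    (hcond : 1 < Filter.limsup (fun n : ℤ =>
        ∑ j ∈ Finset.Icc (xiMax τ n) n, p j * ∏ i ∈ Finset.Ico (τ j) (xiMax τ n), (1 - p i)⁻¹)
      Filter.atTop)
    (x : ℤ → ℝ)
    (hxeq : ∀ n : ℤ, 0 ≤ n → x (n + 1) - x n + p n * x (τ n) = 0) :
    ¬ ∃ N : ℤ, ∀ n ≥ N, 0 < x n := by
  rintro ⟨N, hN⟩
  -- set up thresholds
  have htend := Filter.tendsto_atTop.mp hτlim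
  set M0 : ℤ := max N 0 with hM0
  have hpos : ∀ n, M0 ≤ n → 0 < x n := fun n hn => hN n (le_trans (le_max_left _ _) hn)
  have hM00 : (0:ℤ) ≤ M0 := le_max_right _ _
  obtain ⟨M1', hM1'⟩ := (Filter.eventually_atTop).1 (htend M0)
  set M1 : ℤ := max M1' M0 with hM1d
  have hτM1 : ∀ n, M1 ≤ n → M0 ≤ τ n := fun n hn => hM1' n (le_trans (le_max_left _ _) hn)
  have hM10 : M0 ≤ M1 := le_max_right _ _
  obtain ⟨M2', hM2'⟩ := (Filter.eventually_atTop).1 (htend M1)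
  set M2 : ℤ := max M2' M1 with hM2d
  have hτM2 : ∀ n, M2 ≤ n → M1 ≤ τ n := fun n hn => hM2' n (le_trans (le_max_left _ _) hn)
  have hM21 : M1 ≤ M2 := le_max_right _ _
  obtain ⟨M3', hM3'⟩ := (Filter.eventually_atTop).1 (htend M2)
  set M3 : ℤ := max M3' M2 with hM3d
  have hτM3 : ∀ n, M3 ≤ n → M2 ≤ τ n := fun n hn => hM3' n (le_trans (le_max_left _ _) hn)
  have hM32 : M2 ≤ M3 := le_max_right _ _
  obtain ⟨M4', hM4'⟩ := (Filter.eventually_atTop).1 (htend M3)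
  set M4 : ℤ := max M4' M3 with hM4d
  have hτM4 : ∀ n, M4 ≤ n → M3 ≤ τ n := fun n hn => hM4' n (le_trans (le_max_left _ _) hn)
  have hM43 : M3 ≤ M4 := le_max_right _ _
  -- decrease step
  have hstep : ∀ n, M1 ≤ n → x (n + 1) ≤ x n := by
    intro n hn
    have h0n : (0:ℤ) ≤ n := le_trans (le_trans hM00 hM10) hn
    have he := hxeq n h0n
    nlinarith [hpos (τ n) (hτM1 n hn), hp n h0n]
  -- monotonicity
  have hmono : ∀ a b : ℤ, M1 ≤ a → a ≤ b → x b ≤ x a := by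
    intro a b ha hab
    exact Int.le_induction (motive := fun b _ => x b ≤ x a) le_rfl
      (fun n hn ih => le_trans (hstep n (le_trans ha hn)) ih) b hab
  -- refined decrease
  have hstep2 : ∀ i, M2 ≤ i → x (i + 1) ≤ (1 - p i) * x i := by
    intro i hi
    have h0i : (0:ℤ) ≤ i := by
      have := hτM2 i hi; have := hτ i; omega
    have he := hxeq i h0i
    have hτi : x i ≤ x (τ i) := hmono (τ i) i (hτM2 i hi) (by have := hτ i h0i; omega)
    nlinarith [hp i h0i]
  -- product estimate
  have hprod : ∀ a b : ℤ, M2 ≤ a → a ≤ b →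
      x b ≤ x a * ∏ i ∈ Finset.Ico a b, (1 - p i) := by
    intro a b ha hab
    refine Int.le_induction (motive := fun b _ => x b ≤ x a * ∏ i ∈ Finset.Ico a b, (1 - p i))
      (by simp) (fun n hn ih => ?_) b hab
    beta_reduce at ih ⊢
    rw [Ico_succ_top hn, Finset.prod_insert (by simp)]
    have h1p : 0 < 1 - p n := by
      have h0n : (0:ℤ) ≤ n := le_trans (le_trans hM00 (le_trans hM10 hM21)) (le_trans ha hn)
      linarith [hp1 n h0n]
    calc x (n + 1) ≤ (1 - p n) * x n := hstep2 n (le_trans ha hn)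
      _ ≤ (1 - p n) * (x a * ∏ i ∈ Finset.Ico a n, (1 - p i)) := by
          exact mul_le_mul_of_nonneg_left ih h1p.le
      _ = x a * ((1 - p n) * ∏ i ∈ Finset.Ico a n, (1 - p i)) := by ring
  -- products are positive
  have hprodpos : ∀ a b : ℤ, M0 ≤ a → 0 < ∏ i ∈ Finset.Ico a b, (1 - p i) := by
    intro a b ha
    apply Finset.prod_pos
    intro i hi
    rw [Finset.mem_Ico] at hi
    have : (0:ℤ) ≤ i := le_trans (le_trans hM00 ha) hi.1
    linarith [hp1 i this]
  -- the key eventual bound: S n < 1 for n ≥ M4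
  have hkey : ∀ n, M4 ≤ n →
      (∑ j ∈ Finset.Icc (xiMax τ n) n, p j * ∏ i ∈ Finset.Ico (τ j) (xiMax τ n), (1 - p i)⁻¹)
        ≤ 1 := by
    intro n hn
    have h0n : (0:ℤ) ≤ n := by
      have := hτM4 n hn; have := hτ n; omega
    set ξ : ℤ := xiMax τ n with hξd
    have hξn : ξ ≤ n - 1 := xiMax_le h0n (fun s hs hsn => by have := hτ s hs; omega)
    have hξM3 : M3 ≤ ξ := le_trans (hτM4 n hn) (le_xiMax h0n le_rfl)
    have hξ0 : (0:ℤ) ≤ ξ :=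
      le_trans (le_trans hM00 (le_trans hM10 (le_trans hM21 hM32))) hξM3
    -- telescoping
    have htel := telescope x (show ξ ≤ n by omega)
    have hsum : ∑ j ∈ Finset.Icc ξ n, p j * x (τ j) = x ξ - x (n + 1) := by
      have : ∑ j ∈ Finset.Icc ξ n, (x (j + 1) - x j)
          = ∑ j ∈ Finset.Icc ξ n, (-(p j * x (τ j))) := by
        apply Finset.sum_congr rfl
        intro j hj
        rw [Finset.mem_Icc] at hj
        have h0j : (0:ℤ) ≤ j := le_trans hξ0 hj.1
        linarith [hxeq j h0j]
      rw [this, Finset.sum_neg_distrib] at htel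
      linarith
    -- lower bound each term
    have hterm : ∀ j ∈ Finset.Icc ξ n,
        p j * (x ξ * ∏ i ∈ Finset.Ico (τ j) ξ, (1 - p i)⁻¹) ≤ p j * x (τ j) := by
      intro j hj
      rw [Finset.mem_Icc] at hj
      have hjM3 : M3 ≤ j := le_trans hξM3 hj.1
      have h0j : (0:ℤ) ≤ j := le_trans hξ0 hj.1
      have hτjM2 : M2 ≤ τ j := hτM3 j hjM3
      have hτjξ : τ j ≤ ξ := le_xiMax h0j hj.2
      have hP := hprod (τ j) ξ hτjM2 hτjξ
      have hPpos := hprodpos (τ j) ξ (le_trans (le_trans hM10 hM21) hτjM2)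
      have hxineq : x ξ * ∏ i ∈ Finset.Ico (τ j) ξ, (1 - p i)⁻¹ ≤ x (τ j) := by
        rw [Finset.prod_inv_distrib]
        calc x ξ * (∏ i ∈ Finset.Ico (τ j) ξ, (1 - p i))⁻¹
            ≤ (x (τ j) * ∏ i ∈ Finset.Ico (τ j) ξ, (1 - p i))
              * (∏ i ∈ Finset.Ico (τ j) ξ, (1 - p i))⁻¹ :=
              mul_le_mul_of_nonneg_right hP (inv_nonneg.2 hPpos.le)
          _ = x (τ j) := by field_simp
      exact mul_le_mul_of_nonneg_left hxineq (hp j h0j)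
    have hsumineq : x ξ * (∑ j ∈ Finset.Icc ξ n, p j * ∏ i ∈ Finset.Ico (τ j) ξ, (1 - p i)⁻¹)
        ≤ x ξ - x (n + 1) := by
      rw [Finset.mul_sum, ← hsum]
      apply Finset.sum_le_sum
      intro j hj
      have := hterm j hj
      linarith [this]
    have hxn1 : 0 < x (n + 1) := hpos (n + 1) (by omega)
    have hxξ : 0 < x ξ :=
      hpos ξ (le_trans (le_trans hM10 (le_trans hM21 hM32)) hξM3)
    have : x ξ * (∑ j ∈ Finset.Icc ξ n, p j * ∏ i ∈ Finset.Ico (τ j) ξ, (1 - p i)⁻¹)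
        ≤ x ξ * 1 := by linarith
    exact le_of_mul_le_mul_left this hxξ
  -- conclude via limsup
  have hev : ∀ᶠ n in (Filter.atTop : Filter ℤ),
      (fun n : ℤ => ∑ j ∈ Finset.Icc (xiMax τ n) n,
        p j * ∏ i ∈ Finset.Ico (τ j) (xiMax τ n), (1 - p i)⁻¹) n ≤ 1 :=
    Filter.eventually_atTop.2 ⟨M4, hkey⟩
  have hnonneg : ∀ᶠ n in (Filter.atTop : Filter ℤ),
      (0:ℝ) ≤ ∑ j ∈ Finset.Icc (xiMax τ n) n,
        p j * ∏ i ∈ Finset.Ico (τ j) (xiMax τ n), (1 - p i)⁻¹ := by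
    refine Filter.eventually_atTop.2 ⟨M4, fun n hn => ?_⟩
    apply Finset.sum_nonneg
    intro j hj
    rw [Finset.mem_Icc] at hj
    have h0n : (0:ℤ) ≤ n := by
      have := hτM4 n hn; have := hτ n; omega
    have hξM3 : M3 ≤ xiMax τ n := le_trans (hτM4 n hn) (le_xiMax h0n le_rfl)
    have hξ0 : (0:ℤ) ≤ xiMax τ n :=
      le_trans (le_trans hM00 (le_trans hM10 (le_trans hM21 hM32))) hξM3
    have h0j : (0:ℤ) ≤ j := le_trans hξ0 hj.1
    apply mul_nonneg (hp j h0j)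
    apply Finset.prod_nonneg
    intro i hi
    rw [Finset.mem_Ico] at hi
    have hτjM2 : M2 ≤ τ j := hτM3 j (le_trans hξM3 hj.1)
    have h0i : (0:ℤ) ≤ i :=
      le_trans (le_trans (le_trans hM00 (le_trans hM10 hM21)) hτjM2) hi.1
    exact inv_nonneg.2 (by linarith [hp1 i h0i])
  have hcb : Filter.IsCoboundedUnder (· ≤ ·) Filter.atTop
      (fun n : ℤ => ∑ j ∈ Finset.Icc (xiMax τ n) n,
        p j * ∏ i ∈ Finset.Ico (τ j) (xiMax τ n), (1 - p i)⁻¹) :=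
    Filter.isCoboundedUnder_le_of_eventually_le _ hnonneg
  have := Filter.limsup_le_of_le hcb hev
  linarith

/-- Theorem 2.1: if `τ(n) → ∞`, `p(n) < 1` for all `n ≥ 0`, and
`limsup_{n→∞} ∑_{j=ξ(n)}^{n} p(j) ∏_{i=τ(j)}^{ξ(n)-1} (1 - p(i))⁻¹ > 1`,
then every solution of `Δx(n) + p(n) x(τ(n)) = 0` oscillates. -/
theorem stmt_13 (p : ℤ → ℝ) (τ : ℤ → ℤ)
    (hp : ∀ n : ℤ, 0 ≤ n → 0 ≤ p n)
    (hp1 : ∀ n : ℤ, 0 ≤ n → p n < 1)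
    (hτ : ∀ n : ℤ, 0 ≤ n → τ n ≤ n - 1)
    (hτlim : Filter.Tendsto τ Filter.atTop Filter.atTop)
    (hcond : 1 < Filter.limsup (fun n : ℤ =>
        ∑ j ∈ Finset.Icc (xiMax τ n) n, p j * ∏ i ∈ Finset.Ico (τ j) (xiMax τ n), (1 - p i)⁻¹)
      Filter.atTop)
    (x : ℤ → ℝ)
    (hxeq : ∀ n : ℤ, 0 ≤ n → x (n + 1) - x n + p n * x (τ n) = 0) :
    (¬ ∃ N : ℤ, ∀ n ≥ N, 0 < x n) ∧ (¬ ∃ N : ℤ, ∀ n ≥ N, x n < 0) := by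
  constructor
  · exact no_ev_pos p τ hp hp1 hτ hτlim hcond x hxeq
  · have hy : ∀ n : ℤ, 0 ≤ n → (-x) (n + 1) - (-x) n + p n * (-x) (τ n) = 0 := by
      intro n hn
      have := hxeq n hn
      simp only [Pi.neg_apply]
      linarith
    have h := no_ev_pos p τ hp hp1 hτ hτlim hcond (-x) hy
    rintro ⟨N, hN⟩
    exact h ⟨N, fun n hn => by simpa using hN n hn⟩
end

section
/- Let p(n) = 1/2 if n is a multiple of 3 and p(n) = 3/10 otherwise, and let τ(n) = −1 if n is a multiple of 3 and τ(n) = n − 1 otherwise. Then the sequence x defined by x(−1) = −12/7 and, for k ≥ 0, x(3k) = 1, x(3k+1) = 13/7, x(3k+2) = 109/70, is a solution of Δx(n) + p(n) x(τ(n)) = 0 for all n ≥ 0 that is nonoscillatory (indeed x(n) > 0 for all n ≥ 0). -/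
/-- Example 2.2: with `p(n) = 1/2` if `3 ∣ n` and `3/10` otherwise, and
`τ(n) = -1` if `3 ∣ n` and `n - 1` otherwise, the sequence with `x(-1) = -12/7`,
`x(3k) = 1`, `x(3k+1) = 13/7`, `x(3k+2) = 109/70` (for `k ≥ 0`) is a solution of
`Δx(n) + p(n) x(τ(n)) = 0` for all `n ≥ 0` that is nonoscillatory; indeed
`x(n) > 0` for all `n ≥ 0`. -/
theorem stmt_17 (p : ℤ → ℝ) (τ : ℤ → ℤ)
    (hp : ∀ n : ℤ, p n = if (3 : ℤ) ∣ n then 1 / 2 else 3 / 10)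
    (hτ : ∀ n : ℤ, τ n = if (3 : ℤ) ∣ n then -1 else n - 1)
    (x : ℤ → ℝ)
    (hxm1 : x (-1) = -12 / 7)
    (hx : ∀ k : ℕ, x (3 * (k : ℤ)) = 1 ∧ x (3 * (k : ℤ) + 1) = 13 / 7 ∧
      x (3 * (k : ℤ) + 2) = 109 / 70) :
    (∀ n : ℤ, 0 ≤ n → x (n + 1) - x n + p n * x (τ n) = 0) ∧
    (∀ n : ℤ, 0 ≤ n → 0 < x n) ∧
    (∃ N : ℤ, ∀ n ≥ N, 0 < x n) := by
  have key : ∀ n : ℤ, 0 ≤ n →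
      ∃ k : ℕ, n = 3 * (k : ℤ) ∨ n = 3 * (k : ℤ) + 1 ∨ n = 3 * (k : ℤ) + 2 := by
    intro n hn
    refine ⟨(n / 3).toNat, ?_⟩
    have h1 : ((n / 3).toNat : ℤ) = n / 3 := Int.toNat_of_nonneg (by omega)
    rw [h1]
    omega
  have hpos : ∀ n : ℤ, 0 ≤ n → 0 < x n := by
    intro n hn
    obtain ⟨k, hk | hk | hk⟩ := key n hn <;>
      [rw [hk, (hx k).1]; rw [hk, (hx k).2.1]; rw [hk, (hx k).2.2]] <;> norm_num
  refine ⟨?_, hpos, 0, fun n hn => hpos n hn⟩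
  intro n hn
  obtain ⟨k, hk | hk | hk⟩ := key n hn
  · have hd : (3 : ℤ) ∣ n := ⟨k, hk⟩
    rw [hp, hτ, if_pos hd, if_pos hd, hk, (hx k).1, hxm1]
    rw [show (3 : ℤ) * k + 1 = 3 * (k : ℤ) + 1 from rfl, (hx k).2.1]
    ring
  · have hd : ¬ (3 : ℤ) ∣ n := by omega
    rw [hp, hτ, if_neg hd, if_neg hd, hk, (hx k).2.1]
    rw [show (3 : ℤ) * k + 1 + 1 = 3 * (k : ℤ) + 2 by ring, (hx k).2.2]
    rw [show (3 : ℤ) * k + 1 - 1 = 3 * (k : ℤ) by ring, (hx k).1]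
    ring
  · have hd : ¬ (3 : ℤ) ∣ n := by omega
    rw [hp, hτ, if_neg hd, if_neg hd, hk, (hx k).2.2]
    rw [show (3 : ℤ) * k + 2 + 1 = 3 * ((k + 1 : ℕ) : ℤ) by push_cast; ring, (hx (k + 1)).1]
    rw [show (3 : ℤ) * k + 2 - 1 = 3 * (k : ℤ) + 1 by ring, (hx k).2.1]
    ring
end
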